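/- For n = 3r or n = 3r - 1 (r ≥ 1), the independence complex of the path Pₙ is homotopy equivalent to the sphere S^{r-1}, and I(P_{3r+1}) is contractible. -/

import Mathlib

noncomputable section

open scoped unitInterval

/-- The `n`-dimensional sphere. -/
def Sph (n : ℕ) : Type := (Metric.sphere (0 : EuclideanSpace ℝ (Fin (n+1))) 1 : Set _)

instance (n : ℕ) : TopologicalSpace (Sph n) := by unfold Sph; infer_instance

/-- Basepoint of the sphere. -/
def SphPt (n : ℕ) : Sph n := ⟨EuclideanSpace.single 0 1, by simp⟩

section JoinDefs
variable (X Y : Type) [TopologicalSpace X] [TopologicalSpace Y]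

/-- Points of the auxiliary carrier identified with the point `x` of `X` in the join. -/
def joinAtX (a : (X × Y × I) ⊕ (X ⊕ Y)) (x : X) : Prop :=
  match a with
  | .inl p => p.2.2 = 0 ∧ p.1 = x
  | .inr (.inl x') => x' = x
  | .inr (.inr _) => False

/-- Points of the auxiliary carrier identified with the point `y` of `Y` in the join. -/
def joinAtY (a : (X × Y × I) ⊕ (X ⊕ Y)) (y : Y) : Prop :=
  match a with
  | .inl p => p.2.2 = 1 ∧ p.2.1 = y
  | .inr (.inl _) => False
  | .inr (.inr y') => y' = y

/-- The topological join `X * Y` (with the correct value `X * ∅ = X`, `∅ * Y = Y`). -/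
def Join : Type :=
  Quot (fun a b : (X × Y × I) ⊕ (X ⊕ Y) =>
    (∃ x, joinAtX X Y a x ∧ joinAtX X Y b x) ∨ (∃ y, joinAtY X Y a y ∧ joinAtY X Y b y))

instance instTopJoin : TopologicalSpace (Join X Y) := by unfold Join; infer_instance

/-- The (unreduced) suspension of `X`, as the join of `X` with a two-point discrete space. -/
def Susp : Type := Join X Bool

instance instTopSusp : TopologicalSpace (Susp X) := by unfold Susp; infer_instance

/-- A canonical basepoint of the suspension (the north pole). -/
def SuspPt : Susp X := Quot.mk _ (.inr (.inr true))

/-- The wedge sum of two pointed spaces. -/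
def Wedge (x₀ : X) (y₀ : Y) : Type :=
  Quot (fun a b : X ⊕ Y =>
    (a = .inl x₀ ∨ a = .inr y₀) ∧ (b = .inl x₀ ∨ b = .inr y₀))

instance instTopWedge (x₀ : X) (y₀ : Y) : TopologicalSpace (Wedge X Y x₀ y₀) := by
  unfold Wedge; infer_instance

end JoinDefs

/-- A wedge of spheres of dimensions `d i`, `i : ι` (a point when `ι` is empty). -/
def WedgeSpheres (ι : Type) (d : ι → ℕ) : Type :=
  Quot (fun a b : Unit ⊕ (Σ i, Sph (d i)) =>
    (a = .inl () ∨ ∃ i, a = .inr ⟨i, SphPt (d i)⟩) ∧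
    (b = .inl () ∨ ∃ i, b = .inr ⟨i, SphPt (d i)⟩))

instance (ι : Type) (d : ι → ℕ) : TopologicalSpace (WedgeSpheres ι d) := by
  unfold WedgeSpheres; infer_instance

/-- The geometric realization of the independence complex of a graph: the space of
finitely supported probability distributions on `V` whose support is an independent set. -/
def indepReal {V : Type} (G : SimpleGraph V) : Type :=
  {f : V → ℝ // (∀ x, 0 ≤ f x) ∧ (∑ᶠ x, f x) = 1 ∧
    ∀ u v, f u ≠ 0 → f v ≠ 0 → ¬ G.Adj u v}

instance {V : Type} (G : SimpleGraph V) : TopologicalSpace (indepReal G) := by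
  unfold indepReal; infer_instance

/-- The categorical (tensor) product of two simple graphs. -/
def tensorG {V W : Type} (G : SimpleGraph V) (H : SimpleGraph W) : SimpleGraph (V × W) where
  Adj a b := G.Adj a.1 b.1 ∧ H.Adj a.2 b.2
  symm := ⟨fun _ _ h => ⟨h.1.symm, h.2.symm⟩⟩
  loopless := ⟨fun a h => G.loopless.irrefl a.1 h.1⟩

/-- The complete graph on two vertices. -/
def K2 : SimpleGraph (Fin 2) := SimpleGraph.completeGraph (Fin 2)

/-- The generalized Mycielskian `μ_l(G)`.  The vertex `none` is the apex `w`; the layer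
`V × {i}` of the paper corresponds to the vertices `some (v, i-1)`, the top layer
(the copy of `G`) being `some (v, l)`. -/
def myc {V : Type} (l : ℕ) (G : SimpleGraph V) : SimpleGraph (Option (V × Fin (l+1))) where
  Adj a b :=
    match a, b with
    | some p, some q => G.Adj p.1 q.1 ∧
        ((p.2.val + 1 = q.2.val ∨ q.2.val + 1 = p.2.val) ∨ (p.2.val = q.2.val ∧ p.2.val = l))
    | some p, none => p.2.val = 0
    | none, some q => q.2.val = 0
    | none, none => False
  symm := by
    constructor
    rintro (_|p) (_|q) h <;> simp_all
    exact ⟨h.1.symm, by omega⟩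
  loopless := by
    constructor
    rintro (_|p) h
    · exact h
    · exact SimpleGraph.irrefl _ h.1


/-- The path graph on `n` vertices. -/
def pathG (n : ℕ) : SimpleGraph (Fin n) where
  Adj i j := i.val + 1 = j.val ∨ j.val + 1 = i.val
  symm := ⟨fun _ _ h => h.symm⟩
  loopless := ⟨fun _ h => by omega⟩

namespace Stmt16

variable {n : ℕ}

def Xs (G : SimpleGraph (Fin n)) (D : Set (Fin n)) : Set (Fin n → ℝ) :=
  {f | (∀ x, 0 ≤ f x) ∧ ∑ x, f x = 1 ∧ (∀ u v, f u ≠ 0 → f v ≠ 0 → ¬ G.Adj u v) ∧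
    ∀ d ∈ D, f d = 0}

def foldMap (u v : Fin n) (t : ℝ) (f : Fin n → ℝ) : Fin n → ℝ :=
  fun w => f w + t * f v * ((if w = u then 1 else 0) - (if w = v then 1 else 0))

lemma foldMap_at_u {u v : Fin n} (huv : u ≠ v) (t : ℝ) (f : Fin n → ℝ) :
    foldMap u v t f u = f u + t * f v := by simp [foldMap, huv]

lemma foldMap_at_v {u v : Fin n} (huv : u ≠ v) (t : ℝ) (f : Fin n → ℝ) :
    foldMap u v t f v = f v - t * f v := by
  simp [foldMap, Ne.symm huv]; ring

lemma foldMap_at_other {u v w : Fin n} (hwu : w ≠ u) (hwv : w ≠ v) (t : ℝ) (f : Fin n → ℝ) :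
    foldMap u v t f w = f w := by simp [foldMap, hwu, hwv]

lemma foldMem {G : SimpleGraph (Fin n)} {D : Set (Fin n)} {u v : Fin n}
    (hu : u ∉ D) (hv : v ∉ D) (huv : u ≠ v)
    (hdom : ∀ w, w ∉ D → G.Adj u w → G.Adj v w)
    {t : ℝ} (ht0 : 0 ≤ t) (ht1 : t ≤ 1) {f : Fin n → ℝ} (hf : f ∈ Xs G D) :
    foldMap u v t f ∈ Xs G D := by
  obtain ⟨h1, h2, h3, h4⟩ := hf
  refine ⟨?_, ?_, ?_, ?_⟩
  · intro w
    by_cases hwu : w = u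
    · subst hwu
      rw [foldMap_at_u huv]
      have := mul_nonneg ht0 (h1 v)
      nlinarith [h1 w]
    · by_cases hwv : w = v
      · subst hwv
        rw [foldMap_at_v huv]
        nlinarith [h1 w]
      · rw [foldMap_at_other hwu hwv]
        exact h1 w
  · simp only [foldMap]
    rw [Finset.sum_add_distrib, h2, ← Finset.mul_sum]
    rw [Finset.sum_sub_distrib]
    simp
  · by_cases hfv : f v = 0
    · have he : foldMap u v t f = f := funext fun w => by simp [foldMap, hfv]
      rw [he]; exact h3
    · intro a b ha hb hadj
      have key : ∀ w, foldMap u v t f w ≠ 0 → f w ≠ 0 ∨ w = u := by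
        intro w hw
        by_cases h : w = u
        · exact Or.inr h
        · left
          intro h0
          apply hw
          by_cases h' : w = v
          · exact absurd (h' ▸ h0) hfv
          · rw [foldMap_at_other h h', h0]
      have indepU : ∀ w, f w ≠ 0 → ¬ G.Adj u w := by
        intro w hw hadj'
        have hwD : w ∉ D := fun hD => hw (h4 w hD)
        exact h3 v w hfv hw (hdom w hwD hadj')
      rcases key a ha with ha' | rfl <;> rcases key b hb with hb' | rfl
      · exact h3 a b ha' hb' hadj
      · exact indepU a ha' hadj.symm
      · exact indepU b hb' hadj
      · exact G.loopless.irrefl _ hadj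
  · intro d hd
    have hdu : d ≠ u := fun h => hu (h ▸ hd)
    have hdv : d ≠ v := fun h => hv (h ▸ hd)
    rw [foldMap_at_other hdu hdv, h4 d hd]

lemma foldMem1 {G : SimpleGraph (Fin n)} {D : Set (Fin n)} {u v : Fin n}
    (hu : u ∉ D) (hv : v ∉ D) (huv : u ≠ v)
    (hdom : ∀ w, w ∉ D → G.Adj u w → G.Adj v w)
    {f : Fin n → ℝ} (hf : f ∈ Xs G D) :
    foldMap u v 1 f ∈ Xs G (insert v D) := by
  obtain ⟨h1, h2, h3, h4⟩ := foldMem hu hv huv hdom zero_le_one le_rfl hf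
  refine ⟨h1, h2, h3, ?_⟩
  intro d hd
  rcases hd with rfl | hd
  · rw [foldMap_at_v huv]; ring
  · exact h4 d hd

lemma foldMap_eq_self {u v : Fin n} {f : Fin n → ℝ} (hfv : f v = 0) (t : ℝ) :
    foldMap u v t f = f := funext fun w => by simp [foldMap, hfv]

lemma fold (G : SimpleGraph (Fin n)) (D : Set (Fin n)) (u v : Fin n)
    (hu : u ∉ D) (hv : v ∉ D) (huv : u ≠ v)
    (hdom : ∀ w, w ∉ D → G.Adj u w → G.Adj v w) :
    Nonempty (ContinuousMap.HomotopyEquiv ↥(Xs G D) ↥(Xs G (insert v D))) := by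
  have hsub : ∀ f, f ∈ Xs G (insert v D) → f ∈ Xs G D := by
    rintro f ⟨h1, h2, h3, h4⟩
    exact ⟨h1, h2, h3, fun d hd => h4 d (Or.inr hd)⟩
  have hev : ∀ (w : Fin n), Continuous fun p : ↥(Xs G D) => p.1 w :=
    fun w => (continuous_apply w).comp continuous_subtype_val
  have hcF : Continuous fun p : ↥(Xs G D) => foldMap u v 1 p.1 := by
    unfold foldMap
    apply continuous_pi
    intro w
    exact (hev w).add (((continuous_const.mul (hev v)).mul continuous_const))
  have hcG : Continuous fun q : ↥(Xs G (insert v D)) => q.1 := continuous_subtype_val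
  let F : C(↥(Xs G D), ↥(Xs G (insert v D))) :=
    ⟨fun p => ⟨foldMap u v 1 p.1, foldMem1 hu hv huv hdom p.2⟩, hcF.subtype_mk _⟩
  let Gm : C(↥(Xs G (insert v D)), ↥(Xs G D)) :=
    ⟨fun q => ⟨q.1, hsub q.1 q.2⟩, hcG.subtype_mk _⟩
  refine ⟨⟨F, Gm, ⟨?_⟩, ?_⟩⟩
  · have hmem : ∀ (t : I) (f : Fin n → ℝ), f ∈ Xs G D → foldMap u v (1 - (t:ℝ)) f ∈ Xs G D := by
      intro t f hf
      have h2 := t.2.1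
      have h3 := t.2.2
      exact foldMem hu hv huv hdom (by linarith) (by linarith) hf
    refine { toFun := fun p => ⟨foldMap u v (1 - (p.1:ℝ)) p.2.1, hmem p.1 p.2.1 p.2.2⟩
             continuous_toFun := ?_
             map_zero_left := fun x => Subtype.ext ?_
             map_one_left := fun x => Subtype.ext ?_ }
    · apply Continuous.subtype_mk
      apply continuous_pi
      intro w
      have h1 : Continuous fun p : I × ↥(Xs G D) => (p.1 : ℝ) :=
        continuous_subtype_val.comp continuous_fst
      have h2 : ∀ (z : Fin n), Continuous fun p : I × ↥(Xs G D) => p.2.1 z :=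
        fun z => (continuous_apply z).comp (continuous_subtype_val.comp continuous_snd)
      unfold foldMap
      exact (h2 w).add (((continuous_const.sub h1).mul (h2 v)).mul continuous_const)
    · show foldMap u v (1 - ((0:I):ℝ)) x.1 = _
      norm_num
      rfl
    · show foldMap u v (1 - ((1:I):ℝ)) x.1 = _
      norm_num
      show _ = x.1
      funext w
      simp [foldMap]
  · have he : F.comp Gm = ContinuousMap.id _ := by
      apply ContinuousMap.ext
      intro q
      exact Subtype.ext (foldMap_eq_self (q.2.2.2.2 v (Or.inl rfl)) 1)
    exact he ▸ ContinuousMap.Homotopic.refl _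



def Dset (n k : ℕ) : Set (Fin n) := {d | d.1 % 3 = 2 ∧ d.1 < 3*k}

lemma chain (n : ℕ) (r' : ℕ) (h : ∀ k < r', 3*k+2 < n) :
    Nonempty (ContinuousMap.HomotopyEquiv ↥(Xs (pathG n) (Dset n 0))
      ↥(Xs (pathG n) (Dset n r'))) := by
  induction r' with
  | zero => exact ⟨ContinuousMap.HomotopyEquiv.refl _⟩
  | succ k ih =>
    have hk : 3*k+2 < n := h k (by omega)
    obtain ⟨e1⟩ := ih (fun j hj => h j (by omega))
    have hins : insert (⟨3*k+2, hk⟩ : Fin n) (Dset n k) = Dset n (k+1) := by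
      ext d
      simp only [Set.mem_insert_iff, Dset, Set.mem_setOf_eq, Fin.ext_iff]
      omega
    have hu : (⟨3*k, by omega⟩ : Fin n) ∉ Dset n k := by
      simp only [Dset, Set.mem_setOf_eq]
      omega
    have hv : (⟨3*k+2, hk⟩ : Fin n) ∉ Dset n k := by
      simp only [Dset, Set.mem_setOf_eq]
      omega
    have huv : (⟨3*k, by omega⟩ : Fin n) ≠ ⟨3*k+2, hk⟩ := by
      simp only [ne_eq, Fin.mk.injEq]
      omega
    have hdom : ∀ w, w ∉ Dset n k → (pathG n).Adj ⟨3*k, by omega⟩ w →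
        (pathG n).Adj ⟨3*k+2, hk⟩ w := by
      intro w hw hadj
      simp only [Dset, Set.mem_setOf_eq, not_and, not_lt] at hw
      have hw2 := w.2
      simp only [pathG] at hadj ⊢
      omega
    obtain ⟨e2⟩ := fold (pathG n) (Dset n k) ⟨3*k, by omega⟩ ⟨3*k+2, hk⟩ hu hv huv hdom
    exact ⟨e1.trans (hins ▸ e2)⟩

def Dfull (n : ℕ) : Set (Fin n) := {d : Fin n | d.1 % 3 = 2}

def phi (s n : ℕ) (hn : n = 3*s+3 ∨ n = 3*s+2) (f : Fin n → ℝ) :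
    EuclideanSpace ℝ (Fin (s+1)) :=
  WithLp.toLp 2 (fun i : Fin (s+1) => f ⟨3*i.1, by have := i.2; omega⟩ - f ⟨3*i.1+1, by have := i.2; omega⟩)

def psi (s n : ℕ) (hn : n = 3*s+3 ∨ n = 3*s+2) (x : EuclideanSpace ℝ (Fin (s+1)))
    (w : Fin n) : ℝ :=
  (if w.1 % 3 = 0 then max (x ⟨w.1/3, by have := w.2; omega⟩) 0
   else if w.1 % 3 = 1 then max (-(x ⟨w.1/3, by have := w.2; omega⟩)) 0 else 0) / (∑ i, |x i|)

lemma sum3 (r : ℕ) (g : ℕ → ℝ) (hg : ∀ w, w % 3 = 2 → g w = 0) :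
    ∑ w ∈ Finset.range (3*r), g w = ∑ i ∈ Finset.range r, (g (3*i) + g (3*i+1)) := by
  induction r with
  | zero => simp
  | succ k ih =>
    have h3 : 3*(k+1) = (3*k+1+1)+1 := by ring
    rw [h3, Finset.sum_range_succ, hg (3*k+1+1) (by omega), add_zero,
      Finset.sum_range_succ]
    have h4 : 3*k+1 = (3*k)+1 := by ring
    rw [h4, Finset.sum_range_succ, ih, Finset.sum_range_succ]
    ring

def gext (n : ℕ) (f : Fin n → ℝ) (w : ℕ) : ℝ :=
  if h : w < n then f ⟨w, h⟩ else 0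

lemma sum_gext (n : ℕ) (f : Fin n → ℝ) :
    ∑ w ∈ Finset.range n, gext n f w = ∑ w, f w := by
  rw [← Fin.sum_univ_eq_sum_range (gext n f) n]
  exact Finset.sum_congr rfl fun i _ => by simp [gext, i.2]

lemma gext_vanish {n : ℕ} {G : SimpleGraph (Fin n)} {f : Fin n → ℝ}
    (hf : f ∈ Xs G (Dfull n)) : ∀ w, w % 3 = 2 → gext n f w = 0 := by
  intro w hw
  unfold gext
  split
  · exact hf.2.2.2 _ hw
  · rfl

lemma sum_gext_full (s n : ℕ) (hn : n = 3*s+3 ∨ n = 3*s+2) (f : Fin n → ℝ)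
    (hvan : ∀ w, w % 3 = 2 → gext n f w = 0) :
    ∑ w ∈ Finset.range (3*(s+1)), gext n f w = ∑ w, f w := by
  rcases hn with rfl | rfl
  · rw [show 3*(s+1) = 3*s+3 from by ring]
    exact sum_gext _ f
  · rw [show 3*(s+1) = (3*s+2)+1 from by ring, Finset.sum_range_succ,
      hvan (3*s+2) (by omega), add_zero]
    exact sum_gext _ f

lemma abs_phi (s n : ℕ) (hn : n = 3*s+3 ∨ n = 3*s+2) {f : Fin n → ℝ}
    (hf : f ∈ Xs (pathG n) (Dfull n)) (i : Fin (s+1)) :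
    |phi s n hn f i| = f ⟨3*i.1, by have := i.2; omega⟩ + f ⟨3*i.1+1, by have := i.2; omega⟩ := by
  obtain ⟨h1, h2, h3, h4⟩ := hf
  set a : Fin n := ⟨3*i.1, by have := i.2; omega⟩
  set b : Fin n := ⟨3*i.1+1, by have := i.2; omega⟩
  have hadj : (pathG n).Adj a b := Or.inl rfl
  have hphi : phi s n hn f i = f a - f b := rfl
  by_cases ha : f a = 0
  · rw [hphi, ha, zero_sub, abs_neg, abs_of_nonneg (h1 b)]
    exact (zero_add _).symm
  · have hb : f b = 0 := by
      by_contra hb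
      exact h3 a b ha hb hadj
    rw [hphi, hb, sub_zero, abs_of_nonneg (h1 a)]
    exact (add_zero _).symm

lemma sum_abs_phi (s n : ℕ) (hn : n = 3*s+3 ∨ n = 3*s+2) {f : Fin n → ℝ}
    (hf : f ∈ Xs (pathG n) (Dfull n)) :
    ∑ i, |phi s n hn f i| = 1 := by
  have hvan := gext_vanish hf
  have e1 : ∑ i, |phi s n hn f i| =
      ∑ i ∈ Finset.range (s+1), (gext n f (3*i) + gext n f (3*i+1)) := by
    rw [← Fin.sum_univ_eq_sum_range (fun i => gext n f (3*i) + gext n f (3*i+1)) (s+1)]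
    refine Finset.sum_congr rfl fun i _ => ?_
    rw [abs_phi s n hn hf i]
    have hi := i.2
    congr 1 <;> · unfold gext; rw [dif_pos (by omega)]
  rw [e1, ← sum3 (s+1) _ hvan, sum_gext_full s n hn f hvan, hf.2.1]

lemma phi_ne_zero (s n : ℕ) (hn : n = 3*s+3 ∨ n = 3*s+2) {f : Fin n → ℝ}
    (hf : f ∈ Xs (pathG n) (Dfull n)) : phi s n hn f ≠ 0 := by
  intro h0
  have := sum_abs_phi s n hn hf
  rw [h0] at this
  simp at this

lemma sum_abs_pos {s : ℕ} {x : EuclideanSpace ℝ (Fin (s+1))} (hx : ‖x‖ = 1) :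
    0 < ∑ i, |x i| := by
  have hx0 : x ≠ 0 := by
    intro h
    rw [h] at hx
    simp at hx
  have hex : ∃ i, x i ≠ 0 := by
    by_contra h
    push_neg at h
    exact hx0 (by ext i; simpa using h i)
  obtain ⟨i, hi⟩ := hex
  refine Finset.sum_pos' (fun j _ => abs_nonneg _) ⟨i, Finset.mem_univ i, abs_pos.2 hi⟩

lemma psi_supp (s n : ℕ) (hn : n = 3*s+3 ∨ n = 3*s+2) (x : EuclideanSpace ℝ (Fin (s+1)))
    (w : Fin n) (hw : psi s n hn x w ≠ 0) :
    (w.1 % 3 = 0 ∧ 0 < x ⟨w.1/3, by have := w.2; omega⟩) ∨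
    (w.1 % 3 = 1 ∧ x ⟨w.1/3, by have := w.2; omega⟩ < 0) := by
  unfold psi at hw
  rw [div_ne_zero_iff] at hw
  obtain ⟨hnum, _⟩ := hw
  split_ifs at hnum with h0 h1
  · left
    refine ⟨h0, ?_⟩
    by_contra hle
    push_neg at hle
    exact hnum (max_eq_right hle)
  · right
    refine ⟨h1, ?_⟩
    by_contra hle
    push_neg at hle
    have : -(x ⟨w.1/3, by have := w.2; omega⟩) ≤ 0 := by linarith
    exact hnum (max_eq_right this)
  · exact absurd rfl hnum

lemma psi_eq0 (s n : ℕ) (hn : n = 3*s+3 ∨ n = 3*s+2) (x : EuclideanSpace ℝ (Fin (s+1)))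
    (w : Fin n) (hw : w.1 % 3 = 0) :
    psi s n hn x w = max (x ⟨w.1/3, by have := w.2; omega⟩) 0 / ∑ i, |x i| := by
  unfold psi
  rw [if_pos hw]

lemma psi_eq1 (s n : ℕ) (hn : n = 3*s+3 ∨ n = 3*s+2) (x : EuclideanSpace ℝ (Fin (s+1)))
    (w : Fin n) (hw : w.1 % 3 = 1) :
    psi s n hn x w = max (-(x ⟨w.1/3, by have := w.2; omega⟩)) 0 / ∑ i, |x i| := by
  unfold psi
  rw [if_neg (by omega), if_pos hw]

lemma psi_eq2 (s n : ℕ) (hn : n = 3*s+3 ∨ n = 3*s+2) (x : EuclideanSpace ℝ (Fin (s+1)))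
    (w : Fin n) (hw : w.1 % 3 = 2) :
    psi s n hn x w = 0 := by
  unfold psi
  rw [if_neg (by omega), if_neg (by omega), zero_div]

lemma psi_mem (s n : ℕ) (hn : n = 3*s+3 ∨ n = 3*s+2) (x : EuclideanSpace ℝ (Fin (s+1)))
    (hx : ‖x‖ = 1) : psi s n hn x ∈ Xs (pathG n) (Dfull n) := by
  have hS := sum_abs_pos hx
  have hvan : ∀ w, w % 3 = 2 → gext n (psi s n hn x) w = 0 := by
    intro w hw
    unfold gext
    split
    · exact psi_eq2 s n hn x _ hw
    · rfl
  refine ⟨?_, ?_, ?_, ?_⟩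
  · intro w
    unfold psi
    refine div_nonneg ?_ hS.le
    split_ifs
    · exact le_max_right _ _
    · exact le_max_right _ _
    · exact le_rfl
  · have e1 : ∑ w ∈ Finset.range (3*(s+1)), gext n (psi s n hn x) w = ∑ w, psi s n hn x w :=
      sum_gext_full s n hn _ hvan
    rw [← e1, sum3 (s+1) _ hvan]
    have e2 : ∀ i ∈ Finset.range (s+1),
        gext n (psi s n hn x) (3*i) + gext n (psi s n hn x) (3*i+1) =
        gext (s+1) (fun j => |x j|) i / ∑ j, |x j| := by
      intro i hi
      rw [Finset.mem_range] at hi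
      have h3i : 3*i < n := by omega
      have h3i1 : 3*i+1 < n := by omega
      unfold gext
      rw [dif_pos h3i, dif_pos h3i1, dif_pos hi]
      rw [psi_eq0 s n hn x ⟨3*i, h3i⟩ (by omega : 3*i % 3 = 0),
        psi_eq1 s n hn x ⟨3*i+1, h3i1⟩ (by omega : (3*i+1) % 3 = 1)]
      rw [← add_div]
      have hidx : (⟨(3*i)/3, by omega⟩ : Fin (s+1)) = ⟨i, hi⟩ :=
        Fin.ext (show (3*i)/3 = i by omega)
      have hidx2 : (⟨(3*i+1)/3, by omega⟩ : Fin (s+1)) = ⟨i, hi⟩ :=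
        Fin.ext (show (3*i+1)/3 = i by omega)
      rw [hidx, hidx2, max_zero_add_max_neg_zero_eq_abs_self]
    rw [Finset.sum_congr rfl e2, ← Finset.sum_div, sum_gext (s+1) (fun j => |x j|)]
    exact div_self hS.ne'
  · intro u v hu hv hadj
    have hu' := psi_supp s n hn x u hu
    have hv' := psi_supp s n hn x v hv
    have hadj' : u.1 + 1 = v.1 ∨ v.1 + 1 = u.1 := hadj
    rcases hu' with ⟨hu0, hupos⟩ | ⟨hu1, huneg⟩ <;> rcases hv' with ⟨hv0, hvpos⟩ | ⟨hv1, hvneg⟩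
    · omega
    · have hidx : (⟨u.1/3, by have := u.2; omega⟩ : Fin (s+1)) = ⟨v.1/3, by have := v.2; omega⟩ :=
        Fin.ext (show u.1/3 = v.1/3 by omega)
      rw [hidx] at hupos
      linarith
    · have hidx : (⟨u.1/3, by have := u.2; omega⟩ : Fin (s+1)) = ⟨v.1/3, by have := v.2; omega⟩ :=
        Fin.ext (show u.1/3 = v.1/3 by omega)
      rw [hidx] at huneg
      linarith
    · omega
  · intro d hd
    exact psi_eq2 s n hn x d hd

lemma smul_apply' {s : ℕ} (c : ℝ) (x : EuclideanSpace ℝ (Fin (s+1))) (i : Fin (s+1)) :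
    (c • x) i = c * x i := rfl

lemma psi_phi (s n : ℕ) (hn : n = 3*s+3 ∨ n = 3*s+2) {f : Fin n → ℝ}
    (hf : f ∈ Xs (pathG n) (Dfull n)) :
    psi s n hn (‖phi s n hn f‖⁻¹ • phi s n hn f) = f := by
  obtain ⟨h1, h2, h3, h4⟩ := hf
  have hc : 0 < ‖phi s n hn f‖ := norm_pos_iff.2 (phi_ne_zero s n hn ⟨h1, h2, h3, h4⟩)
  set c : ℝ := ‖phi s n hn f‖ with hcdef
  set x : EuclideanSpace ℝ (Fin (s+1)) := c⁻¹ • phi s n hn f with hxdef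
  have hxi : ∀ i, x i = c⁻¹ * phi s n hn f i := fun i => rfl
  have hSx : ∑ i, |x i| = c⁻¹ := by
    have habs : ∀ i, |x i| = c⁻¹ * |phi s n hn f i| := by
      intro i
      rw [hxi i, abs_mul, abs_inv, abs_of_pos hc]
    rw [Finset.sum_congr rfl fun i _ => habs i, ← Finset.mul_sum,
      sum_abs_phi s n hn ⟨h1, h2, h3, h4⟩, mul_one]
  have hcinv : c⁻¹ ≠ 0 := inv_ne_zero hc.ne'
  have hcinvnn : 0 ≤ c⁻¹ := inv_nonneg.2 hc.le
  funext w
  have hwlt := w.2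
  have hw3 : w.1 % 3 = 0 ∨ w.1 % 3 = 1 ∨ w.1 % 3 = 2 := by omega
  have ha' : (3*(w.1/3)) < n := by omega
  have hb : (3*(w.1/3)+1) < n := by omega
  rcases hw3 with hw | hw | hw
  · rw [psi_eq0 s n hn x w hw, hSx]
    have e : f ⟨3*(w.1/3), ha'⟩ = f w :=
      congrArg f (Fin.ext (show 3*(w.1/3) = w.1 by omega))
    have hxw : x ⟨w.1/3, by have := w.2; omega⟩ = c⁻¹ * (f w - f ⟨3*(w.1/3)+1, hb⟩) := by
      rw [hxi]
      show c⁻¹ * (f ⟨3*(w.1/3), ha'⟩ - f ⟨3*(w.1/3)+1, hb⟩) = _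
      rw [e]
    rw [hxw]
    have hadj : (pathG n).Adj w ⟨3*(w.1/3)+1, hb⟩ :=
      Or.inl (show w.1+1 = 3*(w.1/3)+1 by omega)
    by_cases hfb : f ⟨3*(w.1/3)+1, hb⟩ = 0
    · rw [hfb, sub_zero, max_eq_left (mul_nonneg hcinvnn (h1 w))]
      exact mul_div_cancel_left₀ _ hcinv
    · have hfw : f w = 0 := by
        by_contra hfw
        exact h3 w _ hfw hfb hadj
      rw [hfw, zero_sub]
      rw [max_eq_right (mul_nonpos_of_nonneg_of_nonpos hcinvnn (neg_nonpos.2 (h1 _)))]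
      rw [zero_div]
  · rw [psi_eq1 s n hn x w hw, hSx]
    have e : f ⟨3*(w.1/3)+1, hb⟩ = f w :=
      congrArg f (Fin.ext (show 3*(w.1/3)+1 = w.1 by omega))
    have hxw : -(x ⟨w.1/3, by have := w.2; omega⟩) = c⁻¹ * (f w - f ⟨3*(w.1/3), ha'⟩) := by
      rw [hxi]
      have : phi s n hn f ⟨w.1/3, by have := w.2; omega⟩ =
          f ⟨3*(w.1/3), ha'⟩ - f ⟨3*(w.1/3)+1, hb⟩ := rfl
      rw [this, e]
      ring
    rw [hxw]
    have hadj : (pathG n).Adj ⟨3*(w.1/3), ha'⟩ w :=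
      Or.inl (show 3*(w.1/3)+1 = w.1 by omega)
    by_cases hfa : f ⟨3*(w.1/3), ha'⟩ = 0
    · rw [hfa, sub_zero, max_eq_left (mul_nonneg hcinvnn (h1 w))]
      exact mul_div_cancel_left₀ _ hcinv
    · have hfw : f w = 0 := by
        by_contra hfw
        exact h3 _ w hfa hfw hadj
      rw [hfw, zero_sub]
      rw [max_eq_right (mul_nonpos_of_nonneg_of_nonpos hcinvnn (neg_nonpos.2 (h1 _)))]
      rw [zero_div]
  · rw [psi_eq2 s n hn x w hw]
    exact (h4 w hw).symm

lemma phi_psi (s n : ℕ) (hn : n = 3*s+3 ∨ n = 3*s+2) {x : EuclideanSpace ℝ (Fin (s+1))}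
    (hx : ‖x‖ = 1) :
    ‖phi s n hn (psi s n hn x)‖⁻¹ • phi s n hn (psi s n hn x) = x := by
  have hS := sum_abs_pos hx
  set S := ∑ i, |x i| with hSdef
  have h1 : phi s n hn (psi s n hn x) = S⁻¹ • x := by
    ext i
    have hi := i.2
    have h3i : 3*i.1 < n := by omega
    have h3i1 : 3*i.1+1 < n := by omega
    have hval : phi s n hn (psi s n hn x) i =
        psi s n hn x ⟨3*i.1, h3i⟩ - psi s n hn x ⟨3*i.1+1, h3i1⟩ := rfl
    rw [hval, psi_eq0 s n hn x ⟨3*i.1, h3i⟩ (by omega : (3*i.1) % 3 = 0),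
      psi_eq1 s n hn x ⟨3*i.1+1, h3i1⟩ (by omega : (3*i.1+1) % 3 = 1)]
    have hidx : (⟨(3*i.1)/3, by omega⟩ : Fin (s+1)) = i :=
      Fin.ext (show (3*i.1)/3 = i.1 by omega)
    have hidx2 : (⟨(3*i.1+1)/3, by omega⟩ : Fin (s+1)) = i :=
      Fin.ext (show (3*i.1+1)/3 = i.1 by omega)
    rw [hidx, hidx2, div_sub_div_same, max_zero_sub_max_neg_zero_eq_self]
    show x i / S = S⁻¹ * x i
    rw [div_eq_inv_mul]
  rw [h1, norm_smul]
  have : ‖S⁻¹‖ = S⁻¹ := by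
    rw [Real.norm_eq_abs, abs_of_pos (inv_pos.2 hS)]
  rw [this, hx, mul_one, inv_inv, smul_smul, mul_inv_cancel₀ hS.ne', one_smul]

lemma octEquiv (s n : ℕ) (hn : n = 3*s+3 ∨ n = 3*s+2) :
    Nonempty (ContinuousMap.HomotopyEquiv ↥(Xs (pathG n) (Dfull n))
      ↥(Metric.sphere (0 : EuclideanSpace ℝ (Fin (s+1))) 1)) := by
  have hphic : Continuous fun p : ↥(Xs (pathG n) (Dfull n)) => phi s n hn p.1 := by
    have h1 : Continuous fun p : ↥(Xs (pathG n) (Dfull n)) =>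
        (fun i : Fin (s+1) => p.1 ⟨3*i.1, by have := i.2; omega⟩ - p.1 ⟨3*i.1+1, by have := i.2; omega⟩) := by
      apply continuous_pi
      intro i
      exact ((continuous_apply _).comp continuous_subtype_val).sub
        ((continuous_apply _).comp continuous_subtype_val)
    exact (PiLp.continuous_toLp 2 (fun _ : Fin (s+1) => ℝ)).comp h1
  have hnormne : ∀ p : ↥(Xs (pathG n) (Dfull n)), ‖phi s n hn p.1‖ ≠ 0 :=
    fun p => (norm_pos_iff.2 (phi_ne_zero s n hn p.2)).ne'
  have hFc : Continuous fun p : ↥(Xs (pathG n) (Dfull n)) =>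
      ‖phi s n hn p.1‖⁻¹ • phi s n hn p.1 :=
    ((continuous_norm.comp hphic).inv₀ hnormne).smul hphic
  have hnorm1 : ∀ q : ↥(Metric.sphere (0 : EuclideanSpace ℝ (Fin (s+1))) 1), ‖q.1‖ = 1 := by
    intro q
    have := q.2
    rwa [mem_sphere_zero_iff_norm] at this
  have hSq : ∀ q : ↥(Metric.sphere (0 : EuclideanSpace ℝ (Fin (s+1))) 1),
      (0:ℝ) < ∑ i, |q.1 i| := fun q => sum_abs_pos (hnorm1 q)
  have hev : ∀ i : Fin (s+1),
      Continuous fun q : ↥(Metric.sphere (0 : EuclideanSpace ℝ (Fin (s+1))) 1) => q.1 i := by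
    intro i
    exact (continuous_apply i).comp
      ((PiLp.continuous_ofLp 2 (fun _ : Fin (s+1) => ℝ)).comp continuous_subtype_val)
  have hGc : Continuous fun q : ↥(Metric.sphere (0 : EuclideanSpace ℝ (Fin (s+1))) 1) =>
      psi s n hn q.1 := by
    apply continuous_pi
    intro w
    unfold psi
    apply Continuous.div
    · split_ifs
      · exact (hev _).max continuous_const
      · exact ((hev _).neg).max continuous_const
      · exact continuous_const
    · exact continuous_finset_sum _ fun i _ => (hev i).abs
    · exact fun q => (hSq q).ne'
  exact ⟨(Homeomorph.mk ⟨fun p => ⟨‖phi s n hn p.1‖⁻¹ • phi s n hn p.1,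
      (mem_sphere_zero_iff_norm).2 (norm_smul_inv_norm (phi_ne_zero s n hn p.2))⟩,
    fun q => ⟨psi s n hn q.1, psi_mem s n hn q.1 (hnorm1 q)⟩,
    fun p => Subtype.ext (psi_phi s n hn p.2),
    fun q => Subtype.ext (phi_psi s n hn (hnorm1 q))⟩
    (hFc.subtype_mk _) (hGc.subtype_mk _)).toHomotopyEquiv⟩

def Eset (r m : ℕ) : Set (Fin (3*r+1)) := {d | d.1 ≠ 3*r ∧ (d.1 % 3 = 2 ∨ d.1 < m)}

lemma chain2 (r m : ℕ) (hm : m ≤ 3*r) :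
    Nonempty (ContinuousMap.HomotopyEquiv ↥(Xs (pathG (3*r+1)) (Eset r 0))
      ↥(Xs (pathG (3*r+1)) (Eset r m))) := by
  induction m with
  | zero => exact ⟨ContinuousMap.HomotopyEquiv.refl _⟩
  | succ m ih =>
    obtain ⟨e1⟩ := ih (by omega)
    by_cases hm2 : m % 3 = 2
    · have heq : Eset r (m+1) = Eset r m := by
        ext d
        simp only [Eset, Set.mem_setOf_eq]
        omega
      rw [heq]
      exact ⟨e1⟩
    · have hu : (⟨3*r, by omega⟩ : Fin (3*r+1)) ∉ Eset r m := by
        simp only [Eset, Set.mem_setOf_eq]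
        omega
      have hv : (⟨m, by omega⟩ : Fin (3*r+1)) ∉ Eset r m := by
        simp only [Eset, Set.mem_setOf_eq]
        omega
      have huv : (⟨3*r, by omega⟩ : Fin (3*r+1)) ≠ ⟨m, by omega⟩ := by
        simp only [ne_eq, Fin.mk.injEq]
        omega
      have hdom : ∀ w, w ∉ Eset r m → (pathG (3*r+1)).Adj ⟨3*r, by omega⟩ w →
          (pathG (3*r+1)).Adj ⟨m, by omega⟩ w := by
        intro w hw hadj
        exfalso
        simp only [Eset, Set.mem_setOf_eq, not_and, not_or, not_lt] at hw
        have hw2 := w.2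
        have hadj' : 3*r + 1 = w.1 ∨ w.1 + 1 = 3*r := hadj
        omega
      obtain ⟨e2⟩ := fold (pathG (3*r+1)) (Eset r m) ⟨3*r, by omega⟩ ⟨m, by omega⟩ hu hv huv hdom
      have hins : insert (⟨m, by omega⟩ : Fin (3*r+1)) (Eset r m) = Eset r (m+1) := by
        ext d
        simp only [Set.mem_insert_iff, Eset, Set.mem_setOf_eq, Fin.ext_iff]
        omega
      exact ⟨e1.trans (hins ▸ e2)⟩

lemma Eset_zero (r : ℕ) : Eset r 0 = Dfull (3*r+1) := by
  ext d
  have := d.2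
  simp only [Eset, Dfull, Set.mem_setOf_eq]
  omega

lemma Eset_top (r : ℕ) : Eset r (3*r) = {d : Fin (3*r+1) | d.1 ≠ 3*r} := by
  ext d
  have := d.2
  simp only [Eset, Set.mem_setOf_eq]
  omega

lemma final_contractible (r : ℕ) :
    ContractibleSpace ↥(Xs (pathG (3*r+1)) {d : Fin (3*r+1) | d.1 ≠ 3*r}) := by
  set lst : Fin (3*r+1) := ⟨3*r, by omega⟩ with hlst
  have hp0 : (fun w => if w = lst then (1:ℝ) else 0) ∈
      Xs (pathG (3*r+1)) {d : Fin (3*r+1) | d.1 ≠ 3*r} := by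
    refine ⟨?_, ?_, ?_, ?_⟩
    · intro w
      show (0:ℝ) ≤ if w = lst then 1 else 0
      split <;> norm_num
    · simp
    · intro u v hu hv hadj
      have hu2 : (if u = lst then (1:ℝ) else 0) ≠ 0 := hu
      have hv2 : (if v = lst then (1:ℝ) else 0) ≠ 0 := hv
      have hu' : u = lst := by by_contra h; rw [if_neg h] at hu2; exact hu2 rfl
      have hv' : v = lst := by by_contra h; rw [if_neg h] at hv2; exact hv2 rfl
      subst hu'
      subst hv'
      exact (pathG _).loopless.irrefl _ hadj
    · intro d hd
      have : d ≠ lst := by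
        intro h
        exact hd (by rw [h])
      show (if d = lst then (1:ℝ) else 0) = 0
      rw [if_neg this]
  have huniq : ∀ f ∈ Xs (pathG (3*r+1)) {d : Fin (3*r+1) | d.1 ≠ 3*r},
      f = fun w => if w = lst then (1:ℝ) else 0 := by
    intro f hf
    obtain ⟨h1, h2, h3, h4⟩ := hf
    have hz : ∀ w : Fin (3*r+1), w ≠ lst → f w = 0 := by
      intro w hw
      apply h4
      simp only [Set.mem_setOf_eq]
      intro hval
      exact hw (Fin.ext hval)
    funext w
    by_cases hwl : w = lst
    · subst hwl
      rw [if_pos rfl]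
      have hsum : ∑ x, f x = f lst := Finset.sum_eq_single lst (fun b _ hb => hz b hb) (by simp)
      rw [hsum] at h2
      exact h2
    · rw [if_neg hwl, hz w hwl]
  have hne : Nonempty ↥(Xs (pathG (3*r+1)) {d : Fin (3*r+1) | d.1 ≠ 3*r}) := ⟨⟨_, hp0⟩⟩
  have hss : Subsingleton ↥(Xs (pathG (3*r+1)) {d : Fin (3*r+1) | d.1 ≠ 3*r}) := by
    constructor
    intro a b
    exact Subtype.ext ((huniq a.1 a.2).trans (huniq b.1 b.2).symm)
  infer_instance
end Stmt16

namespace Stmt16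

lemma baseEquiv {n : ℕ} (G : SimpleGraph (Fin n)) :
    Nonempty (ContinuousMap.HomotopyEquiv (indepReal G) ↥(Xs G (Dset n 0))) := by
  have hD : ∀ d : Fin n, d ∉ Dset n 0 := fun d hd => absurd hd.2 (by omega)
  refine ⟨(Homeomorph.mk ⟨?_, ?_, ?_, ?_⟩ ?_ ?_).toHomotopyEquiv⟩
  · exact fun f => ⟨f.1, f.2.1, by rw [← finsum_eq_sum_of_fintype]; exact f.2.2.1, f.2.2.2,
      fun d hd => absurd hd (hD d)⟩
  · exact fun g => ⟨g.1, g.2.1, by rw [finsum_eq_sum_of_fintype]; exact g.2.2.1, g.2.2.2.1⟩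
  · intro f
    rfl
  · intro g
    rfl
  · exact continuous_subtype_val.subtype_mk _
  · exact continuous_subtype_val.subtype_mk _

end Stmt16

theorem stmt16 :
    (∀ r : ℕ, 1 ≤ r →
      Nonempty (ContinuousMap.HomotopyEquiv (indepReal (pathG (3*r))) (Sph (r-1))) ∧
      Nonempty (ContinuousMap.HomotopyEquiv (indepReal (pathG (3*r-1))) (Sph (r-1)))) ∧
    (∀ r : ℕ, ContractibleSpace (indepReal (pathG (3*r+1)))) := by
  constructor
  · intro r hr
    obtain ⟨s, rfl⟩ : ∃ s, r = s + 1 := ⟨r - 1, by omega⟩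
    constructor
    · obtain ⟨e1⟩ := Stmt16.baseEquiv (pathG (3*(s+1)))
      obtain ⟨e2⟩ := Stmt16.chain (3*(s+1)) (s+1) (fun k hk => by omega)
      have hDeq : Stmt16.Dset (3*(s+1)) (s+1) = Stmt16.Dfull (3*(s+1)) := by
        ext d
        have := d.2
        simp only [Stmt16.Dset, Stmt16.Dfull, Set.mem_setOf_eq]
        omega
      obtain ⟨e3⟩ := Stmt16.octEquiv s (3*(s+1)) (Or.inl (by ring))
      exact ⟨e1.trans ((hDeq ▸ e2).trans e3)⟩
    · obtain ⟨e1⟩ := Stmt16.baseEquiv (pathG (3*(s+1)-1))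
      obtain ⟨e2⟩ := Stmt16.chain (3*(s+1)-1) s (fun k hk => by omega)
      have hDeq : Stmt16.Dset (3*(s+1)-1) s = Stmt16.Dfull (3*(s+1)-1) := by
        ext d
        have := d.2
        simp only [Stmt16.Dset, Stmt16.Dfull, Set.mem_setOf_eq]
        omega
      obtain ⟨e3⟩ := Stmt16.octEquiv s (3*(s+1)-1) (Or.inr (by omega))
      exact ⟨e1.trans ((hDeq ▸ e2).trans e3)⟩
  · intro r
    obtain ⟨eb⟩ := Stmt16.baseEquiv (pathG (3*r+1))
    obtain ⟨e1⟩ := Stmt16.chain (3*r+1) r (fun k hk => by omega)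
    have hDeq : Stmt16.Dset (3*r+1) r = Stmt16.Eset r 0 := by
      ext d
      have := d.2
      simp only [Stmt16.Dset, Stmt16.Eset, Set.mem_setOf_eq]
      omega
    obtain ⟨e2⟩ := Stmt16.chain2 r (3*r) le_rfl
    haveI := Stmt16.final_contractible r
    have heq := eb.trans ((hDeq ▸ e1).trans (Stmt16.Eset_top r ▸ e2))
    exact heq.contractibleSpace

end
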